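/- Sphere-packing bound: if r divides n and C ⊆ S_n is a single-error correcting r-regular multipermutation code under the r-regular Ulam metric (i.e., spheres of radius 1 around distinct codeword multipermutations are disjoint, and C is a union of ≡_r equivalence classes), then the number of distinct codeword multipermutations satisfies |C|_r ≤ n! / ((r!)^{n/r} · (1 + (n−1)(n/r − 1))). -/

import Mathlib

namespace UlamPaper

/-- Underlying function of the translocation `φ(i,j)` (0-indexed). -/
def tf (i j k : ℕ) : ℕ :=
  if i ≤ j then (if k < i ∨ j < k then k else if k = j then i else k + 1)
  else (if k < j ∨ i < k then k else if k = j then i else k - 1)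

theorem tf_lt {n i j k : ℕ} (hi : i < n) (hj : j < n) (hk : k < n) : tf i j k < n := by
  unfold tf; split_ifs <;> omega

theorem tf_tf (i j k : ℕ) : tf j i (tf i j k) = k := by
  unfold tf; split_ifs <;> omega

/-- The translocation `φ(i,j)` as a permutation of `Fin n`: it deletes the entry in
position `i` and reinserts it at position `j`, shifting intermediate entries. -/
def transloc {n : ℕ} (i j : Fin n) : Equiv.Perm (Fin n) where
  toFun k := ⟨tf i.val j.val k.val, tf_lt i.isLt j.isLt k.isLt⟩
  invFun k := ⟨tf j.val i.val k.val, tf_lt j.isLt i.isLt k.isLt⟩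
  left_inv k := Fin.ext (tf_tf i.val j.val k.val)
  right_inv k := Fin.ext (tf_tf j.val i.val k.val)

/-- `IsTransloc φ` : `φ` is a translocation. -/
def IsTransloc {n : ℕ} (φ : Equiv.Perm (Fin n)) : Prop := ∃ i j : Fin n, φ = transloc i j

/-- Length of the longest common subsequence of two `n`-length sequences. -/
noncomputable def lcsLen {n : ℕ} {α : Type*} (u v : Fin n → α) : ℕ :=
  sSup {k | ∃ f g : Fin k → Fin n, StrictMono f ∧ StrictMono g ∧ ∀ p, u (f p) = v (g p)}

/-- The Ulam distance `d(σ,π) = n - ℓ(σ,π)`. -/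
noncomputable def ulamDist {n : ℕ} (σ π : Equiv.Perm (Fin n)) : ℕ :=
  n - lcsLen (⇑σ) (⇑π)

/-- The `r`-regular multipermutation `m_σ^r` (with values in `[1, n/r]`). -/
def mult {n : ℕ} (r : ℕ) (σ : Equiv.Perm (Fin n)) : Fin n → ℕ :=
  fun i => (σ i).val / r + 1

/-- The `r`-regular Ulam distance, expressed as `n - ℓ(m_σ^r, m_π^r)`. -/
noncomputable def multDist {n : ℕ} (r : ℕ) (σ π : Equiv.Perm (Fin n)) : ℕ :=
  n - lcsLen (mult r σ) (mult r π)

/-- The `r`-regular Ulam sphere of radius `t` centered at `m_σ^r`. -/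
def multSphere {n : ℕ} (r : ℕ) (σ : Equiv.Perm (Fin n)) (t : ℕ) : Set (Fin n → ℕ) :=
  {x | ∃ π : Equiv.Perm (Fin n), x = mult r π ∧ multDist r σ π ≤ t}

-- ===== stage 1 =====
lemma lcs_bdd {n : ℕ} {α : Type*} (u v : Fin n → α) :
    BddAbove {k | ∃ f g : Fin k → Fin n, StrictMono f ∧ StrictMono g ∧ ∀ p, u (f p) = v (g p)} := by
  refine ⟨n, fun k hk => ?_⟩
  obtain ⟨f, g, hf, hg, h⟩ := hk
  simpa using Fintype.card_le_of_injective f hf.injective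

lemma le_lcsLen {n k : ℕ} {α : Type*} (u v : Fin n → α)
    (h : ∃ f g : Fin k → Fin n, StrictMono f ∧ StrictMono g ∧ ∀ p, u (f p) = v (g p)) :
    k ≤ lcsLen u v := le_csSup (lcs_bdd u v) h

lemma lcsLen_refl {n : ℕ} {α : Type*} (u : Fin n → α) : n ≤ lcsLen u u :=
  le_lcsLen u u ⟨id, id, strictMono_id, strictMono_id, fun _ => rfl⟩

lemma self_mem_sphere {n r : ℕ} (c : Equiv.Perm (Fin n)) : mult r c ∈ multSphere r c 1 := by
  refine ⟨c, rfl, ?_⟩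
  have := lcsLen_refl (mult r c)
  unfold multDist
  omega

lemma transloc_mem_sphere {n r : ℕ} (c : Equiv.Perm (Fin n)) (i j : Fin n) :
    (mult r c) ∘ ⇑(transloc i j) ∈ multSphere r c 1 := by
  refine ⟨c * transloc i j, ?_, ?_⟩
  · funext k; rfl
  · unfold multDist
    have hm : mult r (c * transloc i j) = (mult r c) ∘ ⇑(transloc i j) := rfl
    rw [hm]
    rcases Nat.eq_zero_or_pos n with h0 | h0
    · omega
    have hlcs : n - 1 ≤ lcsLen (mult r c) ((mult r c) ∘ ⇑(transloc i j)) := by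
      apply le_lcsLen
      have hjn := j.isLt; have hin := i.isLt
      have hg : ∀ p : Fin (n-1), (if p.val < j.val then p.val else p.val + 1) < n := by
        intro p; have := p.isLt; split <;> omega
      refine ⟨fun p => transloc i j ⟨_, hg p⟩, fun p => ⟨_, hg p⟩, ?_, ?_, fun p => rfl⟩
      · intro a b hab
        have ha := a.isLt; have hb := b.isLt
        have hab' : a.val < b.val := hab
        show (⟨tf i.val j.val _, _⟩ : Fin n) < ⟨tf i.val j.val _, _⟩
        simp only [Fin.lt_def]
        unfold tf; split_ifs <;> omega
      · intro a b hab
        have hab' : a.val < b.val := hab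
        simp only [Fin.lt_def]
        split_ifs <;> omega
    omega

-- ===== stage 3 : sphere size lower bound =====
section sphere
variable {n : ℕ} {m : Fin n → ℕ}

def occA (m : Fin n → ℕ) (p : Fin n) (w : ℕ) : Finset (Fin n) :=
  Finset.univ.filter fun j => p < j ∧ m j = w

def occB (m : Fin n → ℕ) (p : Fin n) (w : ℕ) : Finset (Fin n) :=
  Finset.univ.filter fun j => j < p ∧ m j = w

lemma occA_spec {p : Fin n} {w : ℕ} (h : (occA m p w).Nonempty) :
    p < (occA m p w).min' h ∧ m ((occA m p w).min' h) = w := by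
  have := (occA m p w).min'_mem h
  simpa [occA] using this

lemma occB_spec {p : Fin n} {w : ℕ} (h : (occB m p w).Nonempty) :
    (occB m p w).max' h < p ∧ m ((occB m p w).max' h) = w := by
  have := (occB m p w).max'_mem h
  simpa [occB] using this

lemma occA_empty {p : Fin n} {w : ℕ} (h : ¬ (occA m p w).Nonempty) :
    ∀ k : Fin n, p < k → m k ≠ w := by
  intro k hk hmk
  exact h ⟨k, by simp [occA, hk, hmk]⟩

def phi (m : Fin n → ℕ) (b : Σ _ : Fin n, ℕ) : Fin n → ℕ :=
  if h : (occA m b.1 b.2).Nonempty then m ∘ ⇑(transloc ((occA m b.1 b.2).min' h) b.1)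
  else if h' : (occB m b.1 b.2).Nonempty then m ∘ ⇑(transloc ((occB m b.1 b.2).max' h') b.1)
  else m

lemma comp_eval (m : Fin n → ℕ) (i p k : Fin n) {t : ℕ} (ht : t < n)
    (htf : tf i.val p.val k.val = t) :
    (m ∘ ⇑(transloc i p)) k = m ⟨t, ht⟩ := by
  show m ⟨tf i.val p.val k.val, _⟩ = m ⟨t, ht⟩
  exact congrArg m (Fin.ext htf)

-- left move evaluations (i > p)
lemma evalL_out {i p k : Fin n} (hpi : p.val < i.val) (hk : k.val < p.val ∨ i.val < k.val) :
    (m ∘ ⇑(transloc i p)) k = m k := by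
  have h := comp_eval m i p k k.isLt (by unfold tf; split_ifs <;> omega)
  rwa [show (⟨k.val, k.isLt⟩ : Fin n) = k from Fin.ext rfl] at h

lemma evalL_at {i p : Fin n} (hpi : p.val < i.val) :
    (m ∘ ⇑(transloc i p)) p = m i := by
  have h := comp_eval m i p p i.isLt (by unfold tf; split_ifs <;> omega)
  rwa [show (⟨i.val, i.isLt⟩ : Fin n) = i from Fin.ext rfl] at h

lemma evalL_mid {i p k : Fin n} (hpi : p.val < i.val) (h1 : p.val < k.val) (h2 : k.val ≤ i.val) :
    (m ∘ ⇑(transloc i p)) k = m ⟨k.val - 1, by omega⟩ :=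
  comp_eval m i p k (by have := k.isLt; omega) (by unfold tf; split_ifs <;> omega)

-- right move evaluations (i < p)
lemma evalR_out {i p k : Fin n} (hpi : i.val < p.val) (hk : k.val < i.val ∨ p.val < k.val) :
    (m ∘ ⇑(transloc i p)) k = m k := by
  have h := comp_eval m i p k k.isLt (by unfold tf; split_ifs <;> omega)
  rwa [show (⟨k.val, k.isLt⟩ : Fin n) = k from Fin.ext rfl] at h

lemma evalR_at {i p : Fin n} (hpi : i.val < p.val) :
    (m ∘ ⇑(transloc i p)) p = m i := by
  have h := comp_eval m i p p i.isLt (by unfold tf; split_ifs <;> omega)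
  rwa [show (⟨i.val, i.isLt⟩ : Fin n) = i from Fin.ext rfl] at h

lemma evalR_mid {i p k : Fin n} (hpi : i.val < p.val) (h1 : i.val ≤ k.val) (h2 : k.val < p.val) :
    (m ∘ ⇑(transloc i p)) k = m ⟨k.val + 1, by omega⟩ :=
  comp_eval m i p k (by have := p.isLt; omega) (by unfold tf; split_ifs <;> omega)

lemma phi_fst {p : Fin n} {w : ℕ} (hw : w ≠ m p) (hex : ∃ j, j ≠ p ∧ m j = w) :
    phi m ⟨p, w⟩ p = w := by
  unfold phi
  split_ifs with h h'
  · rw [evalL_at (occA_spec h).1]; exact (occA_spec h).2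
  · rw [evalR_at (occB_spec h').1]; exact (occB_spec h').2
  · exfalso
    obtain ⟨j, hj, hmj⟩ := hex
    rcases lt_trichotomy j p with hlt | he | hgt
    · exact h' ⟨j, by simp [occB, hlt, hmj]⟩
    · exact hj he
    · exact h ⟨j, by simp [occA, hgt, hmj]⟩

lemma injOn_SA {d d' : Fin n} {w w' : ℕ} (hw : w ≠ m d) (hw' : w' ≠ m d')
    (hA : (occA m d w).Nonempty) (hA' : (occA m d' w').Nonempty)
    (heq : phi m ⟨d, w⟩ = phi m ⟨d', w'⟩) : d = d' ∧ w = w' := by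
  have e1 : phi m ⟨d, w⟩ = m ∘ ⇑(transloc ((occA m d w).min' hA) d) := by
    unfold phi; rw [dif_pos hA]
  have e1' : phi m ⟨d', w'⟩ = m ∘ ⇑(transloc ((occA m d' w').min' hA') d') := by
    unfold phi; rw [dif_pos hA']
  obtain ⟨hi, hmi⟩ := occA_spec hA
  obtain ⟨hi', hmi'⟩ := occA_spec hA'
  have hdd : d = d' := by
    rcases lt_trichotomy d d' with hlt | he | hgt
    · exfalso
      have v1 : phi m ⟨d, w⟩ d = w := by rw [e1, evalL_at hi]; exact hmi
      have v2 : phi m ⟨d', w'⟩ d = m d := by rw [e1', evalL_out hi' (Or.inl hlt)]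
      exact hw (by rw [← v1, heq, v2])
    · exact he
    · exfalso
      have v1 : phi m ⟨d', w'⟩ d' = w' := by rw [e1', evalL_at hi']; exact hmi'
      have v2 : phi m ⟨d, w⟩ d' = m d' := by rw [e1, evalL_out hi (Or.inl hgt)]
      exact hw' (by rw [← v1, ← heq, v2])
  subst hdd
  refine ⟨rfl, ?_⟩
  have v1 : phi m ⟨d, w⟩ d = w := by rw [e1, evalL_at hi]; exact hmi
  have v2 : phi m ⟨d, w'⟩ d = w' := by rw [e1', evalL_at hi']; exact hmi'
  rw [← v1, heq, v2]

lemma injOn_SB {d d' : Fin n} {w w' : ℕ} (hw : w ≠ m d) (hw' : w' ≠ m d')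
    (hB : (occB m d w).Nonempty) (hB' : (occB m d' w').Nonempty)
    (heq : phi m ⟨d, w⟩ = phi m ⟨d', w'⟩)
    (hnA : ¬ (occA m d w).Nonempty) (hnA' : ¬ (occA m d' w').Nonempty) : d = d' ∧ w = w' := by
  have e1 : phi m ⟨d, w⟩ = m ∘ ⇑(transloc ((occB m d w).max' hB) d) := by
    unfold phi; rw [dif_neg hnA, dif_pos hB]
  have e1' : phi m ⟨d', w'⟩ = m ∘ ⇑(transloc ((occB m d' w').max' hB') d') := by
    unfold phi; rw [dif_neg hnA', dif_pos hB']
  obtain ⟨hj, hmj⟩ := occB_spec hB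
  obtain ⟨hj', hmj'⟩ := occB_spec hB'
  have hdd : d = d' := by
    rcases lt_trichotomy d d' with hlt | he | hgt
    · exfalso
      have v1 : phi m ⟨d', w'⟩ d' = w' := by rw [e1', evalR_at hj']; exact hmj'
      have v2 : phi m ⟨d, w⟩ d' = m d' := by rw [e1, evalR_out hj (Or.inr hlt)]
      exact hw' (by rw [← v1, ← heq, v2])
    · exact he
    · exfalso
      have v1 : phi m ⟨d, w⟩ d = w := by rw [e1, evalR_at hj]; exact hmj
      have v2 : phi m ⟨d', w'⟩ d = m d := by rw [e1', evalR_out hj' (Or.inr hgt)]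
      exact hw (by rw [← v1, heq, v2])
  subst hdd
  refine ⟨rfl, ?_⟩
  have v1 : phi m ⟨d, w⟩ d = w := by rw [e1, evalR_at hj]; exact hmj
  have v2 : phi m ⟨d, w'⟩ d = w' := by rw [e1', evalR_at hj']; exact hmj'
  rw [← v1, heq, v2]

lemma collisionAB {d e : Fin n} {w1 w2 : ℕ}
    (hw1 : w1 ≠ m d) (hw2 : w2 ≠ m e)
    (hA : (occA m d w1).Nonempty) (hnA : ¬ (occA m e w2).Nonempty) (hB : (occB m e w2).Nonempty)
    (heq : phi m ⟨d, w1⟩ = phi m ⟨e, w2⟩) :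
    m ⟨e.val - 1, Nat.lt_of_le_of_lt (Nat.sub_le _ _) e.isLt⟩ = w2 := by
  set i := (occA m d w1).min' hA with hidef
  set j := (occB m e w2).max' hB with hjdef
  have e1 : phi m ⟨d, w1⟩ = m ∘ ⇑(transloc i d) := by
    unfold phi; rw [dif_pos hA]
  have e2 : phi m ⟨e, w2⟩ = m ∘ ⇑(transloc j e) := by
    unfold phi; rw [dif_neg hnA, dif_pos hB]
  obtain ⟨hdi, hmi⟩ := occA_spec hA
  obtain ⟨hje, hmj⟩ := occB_spec hB
  have hnocc := occA_empty hnA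
  -- d ≠ e
  have hde : d ≠ e := by
    intro h; subst h
    have v1 : phi m ⟨d, w1⟩ d = w1 := by rw [e1, evalL_at hdi]; exact hmi
    have v2 : phi m ⟨d, w2⟩ d = w2 := by rw [e2, evalR_at hje]; exact hmj
    have hw12 : w1 = w2 := by rw [← v1, heq, v2]
    exact hnocc i hdi (hw12 ▸ hmi)
  -- ¬ e < d
  have hed : ¬ e < d := by
    intro hlt
    have v1 : phi m ⟨d, w1⟩ d = w1 := by rw [e1, evalL_at hdi]; exact hmi
    have v2 : phi m ⟨e, w2⟩ d = m d := by rw [e2, evalR_out hje (Or.inr hlt)]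
    exact hw1 (by rw [← v1, heq, v2])
  have hde' : d.val < e.val := by
    rcases lt_trichotomy d e with h | h | h
    · exact h
    · exact absurd h hde
    · exact absurd h hed
  -- e ≤ i
  have hei : e.val ≤ i.val := by
    by_contra hie
    push_neg at hie
    have v1 : phi m ⟨e, w2⟩ e = w2 := by rw [e2, evalR_at hje]; exact hmj
    have v2 : phi m ⟨d, w1⟩ e = m e := by rw [e1, evalL_out hdi (Or.inr hie)]
    exact hw2 (by rw [← v1, ← heq, v2])
  have v1 : phi m ⟨e, w2⟩ e = w2 := by rw [e2, evalR_at hje]; exact hmj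
  have v2 : phi m ⟨d, w1⟩ e = m ⟨e.val - 1, by omega⟩ := by
    rw [e1, evalL_mid hdi hde' hei]
  rw [← v1, ← heq, v2]

end sphere

lemma phi_mem_sphere {n r : ℕ} (c : Equiv.Perm (Fin n)) (b : Σ _ : Fin n, ℕ) :
    phi (mult r c) b ∈ multSphere r c 1 := by
  unfold phi
  split_ifs with h h'
  · exact transloc_mem_sphere c _ _
  · exact transloc_mem_sphere c _ _
  · exact self_mem_sphere c


section count
variable {n r q : ℕ}

lemma hdiv (hr : 0 < r) (a b : ℕ) (hb : b < r) : (a * r + b) / r = a := by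
  rw [add_comm, Nat.add_mul_div_right _ _ hr, Nat.div_eq_of_lt hb]; omega

lemma hmod (hr : 0 < r) (a b : ℕ) (hb : b < r) : (a * r + b) % r = b := by
  rw [add_comm, Nat.add_mul_mod_self_right, Nat.mod_eq_of_lt hb]

lemma bf_lt (hr : 0 < r) (hn : n = q * r) {i b : ℕ} (hi : i < q) (hb : b < r) :
    i * r + b < n := by
  calc i * r + b < (i + 1) * r := by ring_nf; omega
  _ ≤ q * r := Nat.mul_le_mul_right _ (by omega)
  _ = n := hn.symm

lemma div_lt_q (hr : 0 < r) (hn : n = q * r) (k : Fin n) : k.val / r < q :=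
  Nat.div_lt_of_lt_mul (by rw [Nat.mul_comm, ← hn]; exact k.isLt)

def blockFun (hr : 0 < r) (hn : n = q * r) (g : Fin q → Equiv.Perm (Fin r)) (k : Fin n) : Fin n :=
  ⟨(k.val / r) * r + (g ⟨k.val / r, div_lt_q hr hn k⟩ ⟨k.val % r, Nat.mod_lt _ hr⟩).val,
    bf_lt hr hn (div_lt_q hr hn k) (g _ _).isLt⟩

lemma blockFun_div (hr : 0 < r) (hn : n = q * r) (g : Fin q → Equiv.Perm (Fin r)) (k : Fin n) :
    (blockFun hr hn g k).val / r = k.val / r := hdiv hr _ _ (g _ _).isLt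

lemma blockFun_inj (hr : 0 < r) (hn : n = q * r) (g : Fin q → Equiv.Perm (Fin r)) :
    Function.Injective (blockFun hr hn g) := by
  intro k k' h
  have hdd : k.val / r = k'.val / r := by
    rw [← blockFun_div hr hn g k, ← blockFun_div hr hn g k', h]
  have hv : (blockFun hr hn g k).val = (blockFun hr hn g k').val := congrArg Fin.val h
  unfold blockFun at hv; simp only at hv
  have e1 : (⟨k.val / r, div_lt_q hr hn k⟩ : Fin q) = ⟨k'.val / r, div_lt_q hr hn k'⟩ :=
    Fin.ext hdd
  rw [e1] at hv
  have hx : k.val / r * r = k'.val / r * r := by rw [hdd]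
  have hv2 : (g ⟨k'.val / r, div_lt_q hr hn k'⟩) ⟨k.val % r, Nat.mod_lt _ hr⟩
      = (g ⟨k'.val / r, div_lt_q hr hn k'⟩) ⟨k'.val % r, Nat.mod_lt _ hr⟩ := Fin.ext (by omega)
  have hmm : k.val % r = k'.val % r :=
    congrArg Fin.val ((g _).injective hv2)
  have h1 := Nat.div_add_mod k.val r
  have h2 := Nat.div_add_mod k'.val r
  have hx' : r * (k.val / r) = r * (k'.val / r) := by rw [hdd]
  exact Fin.ext (by omega)

noncomputable def psi (hr : 0 < r) (hn : n = q * r) (g : Fin q → Equiv.Perm (Fin r)) :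
    Equiv.Perm (Fin n) :=
  Equiv.ofBijective _ (Finite.injective_iff_bijective.mp (blockFun_inj hr hn g))

lemma psi_inj (hr : 0 < r) (hn : n = q * r) : Function.Injective (psi hr hn) := by
  intro g g' h
  funext i
  apply Equiv.ext
  intro j
  have hk : i.val * r + j.val < n := bf_lt hr hn i.isLt j.isLt
  have h1 : (i.val * r + j.val) / r = i.val := hdiv hr _ _ j.isLt
  have h2 : (i.val * r + j.val) % r = j.val := hmod hr _ _ j.isLt
  have := congrFun (congrArg (fun (e : Equiv.Perm (Fin n)) => (e : Fin n → Fin n)) h) ⟨_, hk⟩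
  have hval : (blockFun hr hn g ⟨_, hk⟩).val = (blockFun hr hn g' ⟨_, hk⟩).val :=
    congrArg Fin.val this
  unfold blockFun at hval
  simp only at hval
  have e1 : (⟨(i.val * r + j.val) / r, div_lt_q hr hn ⟨_, hk⟩⟩ : Fin q) = i := Fin.ext h1
  have e2 : (⟨(i.val * r + j.val) % r, Nat.mod_lt _ hr⟩ : Fin r) = j := Fin.ext h2
  rw [e1, e2] at hval
  exact Fin.ext (by omega)

lemma count_bound (hr : 0 < r) (hdvd : r ∣ n) :
    (Finset.univ.image (fun σ : Equiv.Perm (Fin n) => mult r σ)).card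
      * r.factorial ^ (n / r) ≤ n.factorial := by
  classical
  set q := n / r with hq
  have hn : n = q * r := (Nat.div_mul_cancel hdvd).symm
  -- the subgroup-as-finset of block-preserving permutations
  set H : Finset (Equiv.Perm (Fin n)) :=
    Finset.univ.filter (fun τ => ∀ k : Fin n, (τ k).val / r = k.val / r) with hH
  have hHcard : r.factorial ^ q ≤ H.card := by
    have h1 : (Finset.univ : Finset (Fin q → Equiv.Perm (Fin r))).card = r.factorial ^ q := by
      simp [Fintype.card_perm]
    rw [← h1]
    apply Finset.card_le_card_of_injOn (psi hr hn)
    · intro g _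
      simp only [hH, Finset.mem_coe, Finset.mem_filter, Finset.mem_univ, true_and]
      intro k
      exact blockFun_div hr hn g k
    · exact fun a _ b _ h => psi_inj hr hn h
  -- fibers of mult have size ≥ |H|
  have hfib : ∀ x ∈ Finset.univ.image (fun σ : Equiv.Perm (Fin n) => mult r σ),
      r.factorial ^ q ≤ (Finset.univ.filter
        (fun σ : Equiv.Perm (Fin n) => mult r σ = x)).card := by
    intro x hx
    obtain ⟨σ₀, -, hσ₀⟩ := Finset.mem_image.mp hx
    refine le_trans hHcard ?_
    apply Finset.card_le_card_of_injOn (fun τ => τ * σ₀)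
    · intro τ hτ
      simp only [hH, Finset.mem_coe, Finset.mem_filter, Finset.mem_univ, true_and] at hτ ⊢
      rw [← hσ₀]
      funext i
      show (τ (σ₀ i)).val / r + 1 = (σ₀ i).val / r + 1
      rw [hτ]
    · exact fun a _ b _ h => mul_right_cancel h
  have hsum := Finset.card_eq_sum_card_image
    (fun σ : Equiv.Perm (Fin n) => mult r σ) (Finset.univ : Finset (Equiv.Perm (Fin n)))
  have htot : (Finset.univ : Finset (Equiv.Perm (Fin n))).card = n.factorial := by
    simp [Fintype.card_perm]
  calc (Finset.univ.image (fun σ : Equiv.Perm (Fin n) => mult r σ)).card * r.factorial ^ (n/r)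
      = ∑ _x ∈ Finset.univ.image (fun σ : Equiv.Perm (Fin n) => mult r σ),
        r.factorial ^ q := by rw [Finset.sum_const, smul_eq_mul]
    _ ≤ ∑ x ∈ Finset.univ.image (fun σ : Equiv.Perm (Fin n) => mult r σ),
        (Finset.univ.filter (fun σ : Equiv.Perm (Fin n) => mult r σ = x)).card :=
        Finset.sum_le_sum hfib
    _ = n.factorial := by rw [← htot, hsum]

end count

lemma sphere_card_ge {n r : ℕ} (hr : 0 < r) (hdvd : r ∣ n) (hn : 0 < n)
    (c : Equiv.Perm (Fin n)) :
    1 + (n - 1) * (n / r - 1) ≤ (multSphere r c 1).ncard := by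
  classical
  set q := n / r with hq
  have hnq : n = q * r := (Nat.div_mul_cancel hdvd).symm
  have hq1 : 1 ≤ q := Nat.div_pos (Nat.le_of_dvd hn hdvd) hr
  set m : Fin n → ℕ := mult r c with hm
  clear_value q m
  have hmIcc : ∀ p : Fin n, m p ∈ Finset.Icc 1 q := by
    intro p
    simp only [hm, mult, Finset.mem_Icc]
    have h1 : (c p).val < q * r := by rw [← hnq]; exact (c p).isLt
    have h2 : (c p).val / r < q := Nat.div_lt_of_lt_mul (by rw [Nat.mul_comm]; exact h1)
    exact ⟨Nat.succ_le_succ (Nat.zero_le _), h2⟩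
  have hocc : ∀ (p : Fin n) (w : ℕ), w ∈ Finset.Icc 1 q → w ≠ m p →
      ∃ j, j ≠ p ∧ m j = w := by
    intro p w hwIcc hw
    simp only [Finset.mem_Icc] at hwIcc
    have hlt : (w - 1) * r < n := by
      calc (w - 1) * r < ((w - 1) + 1) * r := (Nat.mul_lt_mul_right hr).mpr (Nat.lt_succ_self _)
      _ ≤ q * r := Nat.mul_le_mul_right _ (by omega)
      _ = n := hnq.symm
    have key : m (c⁻¹ ⟨(w - 1) * r, hlt⟩) = w := by
      rw [hm]
      show (c (c⁻¹ ⟨(w - 1) * r, hlt⟩)).val / r + 1 = w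
      rw [Equiv.Perm.inv_def, Equiv.apply_symm_apply]
      show (w - 1) * r / r + 1 = w
      rw [Nat.mul_div_cancel _ hr]
      omega
    exact ⟨c⁻¹ ⟨(w - 1) * r, hlt⟩, fun h => hw (by rw [← h, key]), key⟩
  -- index set
  set Sf : Finset (Σ _ : Fin n, ℕ) :=
    Finset.univ.sigma (fun p => (Finset.Icc 1 q).erase (m p)) with hSf
  have hSf_mem : ∀ b : (Σ _ : Fin n, ℕ), b ∈ Sf ↔ (b.2 ∈ Finset.Icc 1 q ∧ b.2 ≠ m b.1) := by
    intro b
    simp [hSf, Finset.mem_sigma, Finset.mem_erase, and_comm]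
  have hSf_card : Sf.card = n * (q - 1) := by
    rw [hSf, Finset.card_sigma]
    have : ∀ p : Fin n, ((Finset.Icc 1 q).erase (m p)).card = q - 1 := by
      intro p
      rw [Finset.card_erase_of_mem (hmIcc p), Nat.card_Icc]
      omega
    rw [Finset.sum_congr rfl (fun p _ => this p), Finset.sum_const, smul_eq_mul,
      Finset.card_univ, Fintype.card_fin]
  set SA : Finset (Σ _ : Fin n, ℕ) := Sf.filter (fun b => (occA m b.1 b.2).Nonempty) with hSA
  set SB : Finset (Σ _ : Fin n, ℕ) := Sf.filter (fun b => ¬ (occA m b.1 b.2).Nonempty) with hSB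
  have hBne : ∀ b ∈ SB, (occB m b.1 b.2).Nonempty := by
    rintro ⟨p, w⟩ hb
    simp only [hSB, Finset.mem_filter] at hb
    obtain ⟨hbSf, hnA⟩ := hb
    rw [hSf_mem] at hbSf
    obtain ⟨j, hj, hmj⟩ := hocc p w hbSf.1 hbSf.2
    rcases lt_trichotomy j p with hlt | he | hgt
    · exact ⟨j, by simp [occB, hlt, hmj]⟩
    · exact absurd he hj
    · exact absurd ⟨j, by simp [occA, hgt, hmj]⟩ hnA
  set SB' : Finset (Σ _ : Fin n, ℕ) := SB.filter (fun b => phi m b ∈ SA.image (phi m)) with hSB'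
  -- |SB'| ≤ q - 1
  have hSB'_card : SB'.card ≤ q - 1 := by
    have hlast : (⟨n - 1, by omega⟩ : Fin n) = ⟨n-1, by omega⟩ := rfl
    have : SB'.card ≤ ((Finset.Icc 1 q).erase (m ⟨n - 1, by omega⟩)).card := by
      apply Finset.card_le_card_of_injOn (fun b => b.2)
      · rintro ⟨p, w⟩ hb
        simp only [Finset.mem_coe, hSB', hSB, Finset.mem_filter] at hb
        obtain ⟨⟨hbSf, hnA⟩, _⟩ := hb
        rw [hSf_mem] at hbSf
        simp only [Finset.mem_coe, Finset.mem_erase]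
        refine ⟨?_, hbSf.1⟩
        intro hweq
        have hnocc := occA_empty hnA
        rcases Nat.lt_or_ge p.val (n-1) with hplt | hpge
        · exact hnocc ⟨n-1, by omega⟩ (by rw [Fin.lt_def]; exact hplt) hweq.symm
        · have : p = ⟨n-1, by omega⟩ := Fin.ext (by have := p.isLt; show p.val = n - 1; omega)
          rw [this] at hbSf
          exact hbSf.2 (by rw [hweq])
      · rintro ⟨p, w⟩ hb ⟨p', w'⟩ hb' hww
        simp only at hww
        subst hww
        simp only [hSB', hSB, Finset.mem_filter, Finset.coe_filter, Set.mem_setOf_eq] at hb hb'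
        obtain ⟨⟨hbSf, hnA⟩, hcol⟩ := hb
        obtain ⟨⟨hbSf', hnA'⟩, hcol'⟩ := hb'
        rw [hSf_mem] at hbSf hbSf'
        obtain ⟨a, haSA, haeq⟩ := Finset.mem_image.mp hcol
        obtain ⟨a', haSA', haeq'⟩ := Finset.mem_image.mp hcol'
        simp only [hSA, Finset.mem_filter] at haSA haSA'
        obtain ⟨haSf, hAa⟩ := haSA
        obtain ⟨haSf', hAa'⟩ := haSA'
        rw [hSf_mem] at haSf haSf'
        have hcoll := collisionAB haSf.2 hbSf.2 hAa hnA (hBne ⟨p, w⟩ (by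
          simp only [hSB, Finset.mem_filter]; exact ⟨(hSf_mem _).mpr hbSf, hnA⟩)) (by
            rw [show (⟨a.1, a.2⟩ : Σ _ : Fin n, ℕ) = a from rfl, haeq])
        have hcoll' := collisionAB haSf'.2 hbSf'.2 hAa' hnA' (hBne ⟨p', w⟩ (by
          simp only [hSB, Finset.mem_filter]; exact ⟨(hSf_mem _).mpr hbSf', hnA'⟩)) (by
            rw [show (⟨a'.1, a'.2⟩ : Σ _ : Fin n, ℕ) = a' from rfl, haeq'])
        have hnocc := occA_empty hnA
        have hnocc' := occA_empty hnA'
        have hpp : p.val = p'.val := by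
          by_contra hne
          rcases Nat.lt_or_ge p.val p'.val with hlt | hge
          · -- occurrence of w at p'-1 ≥ p
            rcases Nat.lt_or_ge p.val (p'.val - 1) with h1 | h1
            · exact hnocc ⟨p'.val - 1, by omega⟩ (by rw [Fin.lt_def]; exact h1) hcoll'
            · have hc : m p = w := by
                rw [show p = (⟨p'.val - 1, Nat.lt_of_le_of_lt (Nat.sub_le _ _) p'.isLt⟩ : Fin n)
                  from Fin.ext (by show p.val = p'.val - 1; omega)]
                exact hcoll'
              exact hbSf.2 hc.symm
          · have hlt : p'.val < p.val := by omega
            rcases Nat.lt_or_ge p'.val (p.val - 1) with h1 | h1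
            · exact hnocc' ⟨p.val - 1, by omega⟩ (by rw [Fin.lt_def]; exact h1) hcoll
            · have hc : m p' = w := by
                rw [show p' = (⟨p.val - 1, Nat.lt_of_le_of_lt (Nat.sub_le _ _) p.isLt⟩ : Fin n)
                  from Fin.ext (by show p'.val = p.val - 1; omega)]
                exact hcoll
              exact hbSf'.2 hc.symm
        have : p = p' := Fin.ext hpp
        subst this
        rfl
    have : ((Finset.Icc 1 q).erase (m ⟨n - 1, by omega⟩)).card = q - 1 := by
      rw [Finset.card_erase_of_mem (hmIcc _), Nat.card_Icc]; omega
    omega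
  -- assemble
  have hsplit : SA.card + SB.card = Sf.card :=
    Finset.card_filter_add_card_filter_not _
  have hdisjAB : Disjoint SA SB := Finset.disjoint_filter_filter_not Sf Sf _
  have hSB'sub : SB' ⊆ SB := Finset.filter_subset _ _
  set U : Finset (Σ _ : Fin n, ℕ) := SA ∪ (SB \ SB') with hU
  have hUsub : U ⊆ Sf := by
    intro b hb
    rcases Finset.mem_union.mp hb with h | h
    · exact Finset.filter_subset _ _ h
    · exact Finset.filter_subset _ _ (Finset.sdiff_subset h)
  have hUcard : U.card = SA.card + (SB.card - SB'.card) := by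
    rw [hU, Finset.card_union_of_disjoint (hdisjAB.mono_right Finset.sdiff_subset),
      Finset.card_sdiff_of_subset hSB'sub]
  have hinj : Set.InjOn (phi m) ↑U := by
    rintro b hb b' hb' heq
    rw [Finset.mem_coe, hU, Finset.mem_union] at hb hb'
    have hfacts : ∀ a : (Σ _ : Fin n, ℕ), a ∈ Sf → a.2 ≠ m a.1 := fun a ha => ((hSf_mem a).mp ha).2
    rcases hb with hbA | hbB <;> rcases hb' with hbA' | hbB'
    · rcases b with ⟨p, w⟩; rcases b' with ⟨p', w'⟩
      have h1 := Finset.mem_filter.mp hbA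
      have h2 := Finset.mem_filter.mp hbA'
      obtain ⟨hp, hw⟩ := injOn_SA (hfacts _ h1.1) (hfacts _ h2.1) h1.2 h2.2 heq
      subst hp; subst hw; rfl
    · exfalso
      have hb'B := (Finset.mem_sdiff.mp hbB').1
      have hb'notB' := (Finset.mem_sdiff.mp hbB').2
      exact hb'notB' (Finset.mem_filter.mpr ⟨hb'B,
        Finset.mem_image.mpr ⟨b, hbA, heq⟩⟩)
    · exfalso
      have hbBB := (Finset.mem_sdiff.mp hbB).1
      have hbnotB' := (Finset.mem_sdiff.mp hbB).2
      exact hbnotB' (Finset.mem_filter.mpr ⟨hbBB,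
        Finset.mem_image.mpr ⟨b', hbA', heq.symm⟩⟩)
    · rcases b with ⟨p, w⟩; rcases b' with ⟨p', w'⟩
      have h1 := Finset.mem_filter.mp (Finset.mem_sdiff.mp hbB).1
      have h2 := Finset.mem_filter.mp (Finset.mem_sdiff.mp hbB').1
      obtain ⟨hp, hw⟩ := injOn_SB (hfacts _ h1.1) (hfacts _ h2.1)
        (hBne _ (Finset.mem_filter.mpr h1)) (hBne _ (Finset.mem_filter.mpr h2)) heq h1.2 h2.2
      subst hp; subst hw; rfl
  have himg : (U.image (phi m)).card = U.card := Finset.card_image_of_injOn hinj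
  have hmnot : m ∉ U.image (phi m) := by
    intro hmem
    obtain ⟨b, hb, hbeq⟩ := Finset.mem_image.mp hmem
    have hbSf := hUsub hb
    rcases b with ⟨p, w⟩
    rw [hSf_mem] at hbSf
    have hval := phi_fst hbSf.2 (hocc p w hbSf.1 hbSf.2)
    rw [hbeq] at hval
    exact hbSf.2 hval.symm
  set N : Finset (Fin n → ℕ) := insert m (U.image (phi m)) with hN
  have hNcard : 1 + (n-1) * (q-1) ≤ N.card := by
    rw [hN, Finset.card_insert_of_notMem hmnot, himg, hUcard]
    have h1 : (n-1) * (q-1) = n * (q-1) - (q-1) := Nat.sub_one_mul _ _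
    have h2 : 1 * (q-1) ≤ n * (q-1) := Nat.mul_le_mul_right _ hn
    omega
  have hNsub : ↑N ⊆ multSphere r c 1 := by
    intro x hx
    rw [hN, Finset.coe_insert, Set.mem_insert_iff] at hx
    rcases hx with rfl | hx
    · rw [hm]; exact self_mem_sphere c
    · rw [Finset.mem_coe] at hx
      obtain ⟨b, hb, rfl⟩ := Finset.mem_image.mp hx
      rw [hm]
      exact phi_mem_sphere c b
  have hfin : (multSphere r c 1).Finite := by
    apply Set.Finite.subset (Set.finite_range (fun π : Equiv.Perm (Fin n) => mult r π))
    rintro x ⟨π, rfl, -⟩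
    exact ⟨π, rfl⟩
  calc 1 + (n-1) * (q-1) ≤ N.card := hNcard
    _ = (↑N : Set (Fin n → ℕ)).ncard := (Set.ncard_coe_finset N).symm
    _ ≤ (multSphere r c 1).ncard := Set.ncard_le_ncard hNsub hfin


/-- Sphere-packing bound for single-error correcting `r`-regular multipermutation
codes: `|C|_r ≤ n! / ((r!)^{n/r} · (1 + (n−1)(n/r − 1)))`. -/
theorem sphere_packing_bound {n r : ℕ} (hr : 0 < r) (hdvd : r ∣ n)
    (C : Set (Equiv.Perm (Fin n)))
    (hclosed : ∀ c ∈ C, ∀ σ : Equiv.Perm (Fin n), mult r σ = mult r c → σ ∈ C)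
    (hsep : ∀ c ∈ C, ∀ c' ∈ C, mult r c ≠ mult r c' →
      Disjoint (multSphere r c 1) (multSphere r c' 1)) :
    {x : Fin n → ℕ | ∃ c ∈ C, x = mult r c}.ncard ≤
      n.factorial / (r.factorial ^ (n / r) * (1 + (n - 1) * (n / r - 1))) := by
  classical
  rcases Nat.eq_zero_or_pos n with hn0 | hn
  · subst hn0
    have hrhs : Nat.factorial 0 / (r.factorial ^ (0 / r) * (1 + (0 - 1) * (0 / r - 1))) = 1 := by
      simp
    rw [hrhs]
    have hT : {x : Fin 0 → ℕ | ∃ c ∈ C, x = mult r c} ⊆ {fun i => i.elim0} := by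
      intro x _
      simp only [Set.mem_singleton_iff]
      funext i; exact i.elim0
    calc {x : Fin 0 → ℕ | ∃ c ∈ C, x = mult r c}.ncard
        ≤ ({fun i => i.elim0} : Set (Fin 0 → ℕ)).ncard :=
          Set.ncard_le_ncard hT (Set.finite_singleton _)
      _ = 1 := Set.ncard_singleton _
  · set q := n / r with hq
    set A := r.factorial ^ q with hA
    set V := 1 + (n - 1) * (q - 1) with hV
    have hVpos : 0 < V := by omega
    have hApos : 0 < A := pow_pos (Nat.factorial_pos r) q
    rw [Nat.le_div_iff_mul_le (Nat.mul_pos hApos hVpos)]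
    set T := {x : Fin n → ℕ | ∃ c ∈ C, x = mult r c} with hTdef
    set R := Set.range (fun σ : Equiv.Perm (Fin n) => mult r σ) with hR
    have hRfin : R.Finite := Set.finite_range _
    have hTsub : T ⊆ R := by rintro x ⟨c, -, rfl⟩; exact ⟨c, rfl⟩
    have hTfin : T.Finite := hRfin.subset hTsub
    -- choice of codewords
    have hchoice : ∀ x ∈ T, ∃ cc : Equiv.Perm (Fin n), cc ∈ C ∧ x = mult r cc := fun x hx => hx
    choose! f hf1 hf2 using hchoice
    -- finset versions
    set tF := hTfin.toFinset with htF
    have hsphfin : ∀ x : Fin n → ℕ, (multSphere r (f x) 1).Finite := by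
      intro x
      apply hRfin.subset
      rintro y ⟨π, rfl, -⟩
      exact ⟨π, rfl⟩
    set sphF : (Fin n → ℕ) → Finset (Fin n → ℕ) := fun x => (hsphfin x).toFinset with hsphF
    have hdisj : ∀ x ∈ tF, ∀ y ∈ tF, x ≠ y → Disjoint (sphF x) (sphF y) := by
      intro x hx y hy hxy
      rw [htF, Set.Finite.mem_toFinset] at hx hy
      rw [hsphF]
      simp only [Set.Finite.disjoint_toFinset]
      apply hsep (f x) (hf1 x hx) (f y) (hf1 y hy)
      rw [← hf2 x hx, ← hf2 y hy]
      exact fun h => hxy h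
    have hsub : tF.biUnion sphF ⊆ hRfin.toFinset := by
      intro z hz
      rw [Finset.mem_biUnion] at hz
      obtain ⟨x, -, hzx⟩ := hz
      rw [hsphF] at hzx
      rw [Set.Finite.mem_toFinset] at hzx ⊢
      obtain ⟨π, rfl, -⟩ := hzx
      exact ⟨π, rfl⟩
    have hcount1 : tF.card * V ≤ hRfin.toFinset.card := by
      calc tF.card * V = ∑ _x ∈ tF, V := by rw [Finset.sum_const, smul_eq_mul]
        _ ≤ ∑ x ∈ tF, (sphF x).card := by
            apply Finset.sum_le_sum
            intro x hx
            have := sphere_card_ge hr hdvd hn (f x)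
            rwa [Set.ncard_eq_toFinset_card _ (hsphfin x)] at this
        _ = (tF.biUnion sphF).card := (Finset.card_biUnion hdisj).symm
        _ ≤ hRfin.toFinset.card := Finset.card_le_card hsub
    have hRcard : hRfin.toFinset.card
        = (Finset.univ.image (fun σ : Equiv.Perm (Fin n) => mult r σ)).card := by
      congr 1
      apply Finset.ext
      intro x
      rw [Set.Finite.mem_toFinset]
      simp [hR]
    have hcount2 : hRfin.toFinset.card * A ≤ n.factorial := by
      rw [hRcard, hA, hq]
      exact count_bound hr hdvd
    have hTcard : T.ncard = tF.card := Set.ncard_eq_toFinset_card _ hTfin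
    calc T.ncard * (A * V) = (T.ncard * V) * A := by ring
      _ ≤ hRfin.toFinset.card * A := Nat.mul_le_mul_right _ (by rw [hTcard]; exact hcount1)
      _ ≤ n.factorial := hcount2


end UlamPaper
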